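/- arXiv:1712.05671 — 2 statements merged into one kernel-verified Lean document; each statement's English description precedes it below -/
import Mathlib

section
/- Let $M$ be an additive commutative group and let $g : \mathbb{N} \to M$ be a function with finite support (i.e., $g(k) = 0$ for all sufficiently large $k$). Then for all natural numbers $n$ and $N$: $\sum_{j=0}^{N}\sum_{i \ge 0}(-1)^j\binom{n+j}{j}\binom{n+j+i}{i}\, g(i+j) \;=\; g(0) \;+\; \sum_{k \ge N+1}\Big(\sum_{j=0}^{N}(-1)^j\binom{n+j}{j}\binom{n+k}{k-j}\Big) g(k)$, where all sums are finite by the support assumption. -/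
open Finset

lemma binom_prod (n k j : ℕ) (hj : j ≤ k) :
    (n + j).choose j * (n + k).choose (k - j) = (n + k).choose k * k.choose j := by
  have h1 : (n + k).choose (k - j) = (n + k).choose (n + j) := by
    have : k - j = (n + k) - (n + j) := by omega
    rw [this, Nat.choose_symm (by omega)]
  have h2 := Nat.choose_mul (n := n + k) (k := n + j) (s := n) (by omega)
  have h3 : (n + k) - n = k := by omega
  have h4 : (n + j) - n = j := by omega
  rw [h3, h4] at h2
  calc (n + j).choose j * (n + k).choose (k - j)
      = (n + k).choose (n + j) * (n + j).choose n := by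
        rw [h1, (Nat.choose_symm_add (a := n) (b := j)).symm]; ring
    _ = (n + k).choose n * k.choose j := h2
    _ = (n + k).choose k * k.choose j := by rw [Nat.choose_symm_add]

lemma binom_id (n k : ℕ) :
    ∑ j ∈ range (k + 1), (-1 : ℤ) ^ j * ((n + j).choose j : ℤ) * ((n + k).choose (k - j) : ℤ)
      = if k = 0 then 1 else 0 := by
  have h : ∀ j ∈ range (k + 1),
      (-1 : ℤ) ^ j * ((n + j).choose j : ℤ) * ((n + k).choose (k - j) : ℤ)
        = ((n + k).choose k : ℤ) * ((-1 : ℤ) ^ j * (k.choose j : ℤ)) := by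
    intro j hj
    rw [mem_range] at hj
    have hp := binom_prod n k j (by omega)
    have : ((n + j).choose j : ℤ) * ((n + k).choose (k - j) : ℤ)
        = ((n + k).choose k : ℤ) * (k.choose j : ℤ) := by exact_mod_cast congrArg (Nat.cast : ℕ → ℤ) hp
    calc (-1 : ℤ) ^ j * ((n + j).choose j : ℤ) * ((n + k).choose (k - j) : ℤ)
        = (-1 : ℤ) ^ j * (((n + j).choose j : ℤ) * ((n + k).choose (k - j) : ℤ)) := by ring
      _ = (-1 : ℤ) ^ j * (((n + k).choose k : ℤ) * (k.choose j : ℤ)) := by rw [this]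
      _ = ((n + k).choose k : ℤ) * ((-1 : ℤ) ^ j * (k.choose j : ℤ)) := by ring
  rw [Finset.sum_congr rfl h, ← Finset.mul_sum, Int.alternating_sum_range_choose]
  split_ifs with hk <;> simp [hk]

/-- Rearranging the double sum in the Key Lemma: if `g : ℕ → M` has finite support, then
`∑_{j=0}^N ∑_{i≥0} (-1)^j C(n+j,j) C(n+j+i,i) g(i+j)
  = g 0 + ∑_{k ≥ N+1} (∑_{j=0}^N (-1)^j C(n+j,j) C(n+k,k-j)) g(k)`. -/
theorem key_lemma_rearrangement {M : Type*} [AddCommGroup M] (g : ℕ → M)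
    (hg : (Function.support g).Finite) (n N : ℕ) :
    ∑ j ∈ Finset.range (N + 1), ∑ᶠ i : ℕ,
        ((-1 : ℤ) ^ j * ((n + j).choose j : ℤ) * ((n + j + i).choose i : ℤ)) • g (i + j) =
      g 0 + ∑ᶠ (k : ℕ) (_ : N + 1 ≤ k),
        (∑ j ∈ Finset.range (N + 1),
            (-1 : ℤ) ^ j * ((n + j).choose j : ℤ) * ((n + k).choose (k - j) : ℤ)) • g k := by
  -- a bound on the support
  obtain ⟨B, hNB, hB⟩ : ∃ B : ℕ, N + 1 ≤ B ∧ ∀ k, B ≤ k → g k = 0 := by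
    refine ⟨max (N + 1) (hg.toFinset.sup id + 1), le_max_left _ _, fun k hk => ?_⟩
    by_contra h
    have hk' : k ∈ hg.toFinset := by simp [Function.mem_support, h]
    have := Finset.le_sup (f := id) hk'
    simp only [id] at this
    omega
  set a : ℕ → ℕ → ℤ := fun j k =>
    (-1 : ℤ) ^ j * ((n + j).choose j : ℤ) * ((n + k).choose (k - j) : ℤ) with ha
  -- LHS: replace finsum by finite sum
  have step1 : ∀ j ∈ range (N + 1),
      (∑ᶠ i : ℕ, ((-1 : ℤ) ^ j * ((n + j).choose j : ℤ) * ((n + j + i).choose i : ℤ)) • g (i + j))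
        = ∑ i ∈ range B, ((-1 : ℤ) ^ j * ((n + j).choose j : ℤ) * ((n + j + i).choose i : ℤ)) • g (i + j) := by
    intro j _
    apply finsum_eq_sum_of_support_subset
    intro i hi
    simp only [Function.mem_support] at hi
    simp only [coe_range, Set.mem_Iio]
    by_contra h
    exact hi (by rw [hB (i + j) (by omega), smul_zero])
  rw [Finset.sum_congr rfl step1]
  -- RHS: replace finsum by finite sum over Ico (N+1) B
  have step2 : (∑ᶠ (k : ℕ) (_ : N + 1 ≤ k), (∑ j ∈ range (N + 1), a j k) • g k)
      = ∑ k ∈ Ico (N + 1) B, (∑ j ∈ range (N + 1), a j k) • g k := by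
    apply finsum_cond_eq_sum_of_cond_iff
    intro k hk
    have hgk : g k ≠ 0 := by
      intro h0; exact hk (by rw [h0, smul_zero])
    have hkB : k < B := by
      by_contra h; exact hgk (hB k (by omega))
    simp only [mem_Ico]
    omega
  rw [step2]
  -- reindex each inner sum by k = i + j
  have step3 : ∀ j ∈ range (N + 1),
      (∑ i ∈ range B, ((-1 : ℤ) ^ j * ((n + j).choose j : ℤ) * ((n + j + i).choose i : ℤ)) • g (i + j))
        = ∑ k ∈ range B, (if j ≤ k then a j k • g k else 0) := by
    intro j hj
    rw [mem_range] at hj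
    have e1 : (∑ k ∈ Ico j (B + j), a j k • g k)
        = ∑ i ∈ range B, ((-1 : ℤ) ^ j * ((n + j).choose j : ℤ) * ((n + j + i).choose i : ℤ)) • g (i + j) := by
      rw [Finset.sum_Ico_eq_sum_range]
      have : B + j - j = B := by omega
      rw [this]
      apply Finset.sum_congr rfl
      intro i _
      simp only [ha]
      rw [show j + i = i + j from by omega, show i + j - j = i from by omega,
        show n + (i + j) = n + j + i from by omega]
    rw [← e1]
    have e2 : (∑ k ∈ Ico j (B + j), a j k • g k) = ∑ k ∈ Ico j B, a j k • g k := by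
      rw [← Finset.sum_Ico_consecutive _ (show j ≤ B by omega) (show B ≤ B + j by omega)]
      have : (∑ k ∈ Ico B (B + j), a j k • g k) = 0 := by
        apply Finset.sum_eq_zero
        intro k hk
        rw [mem_Ico] at hk
        rw [hB k hk.1, smul_zero]
      rw [this, add_zero]
    rw [e2, ← Finset.sum_filter]
    apply Finset.sum_congr
    · ext k; simp only [mem_filter, mem_range, mem_Ico]; omega
    · intros; rfl
  rw [Finset.sum_congr rfl step3, Finset.sum_comm]
  -- collapse the inner ite-sum into a scalar
  have step4 : ∀ k ∈ range B,
      (∑ j ∈ range (N + 1), if j ≤ k then a j k • g k else 0)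
        = (∑ j ∈ range (N + 1), if j ≤ k then a j k else 0) • g k := by
    intro k _
    rw [Finset.sum_smul]
    apply Finset.sum_congr rfl
    intro j _
    split_ifs <;> simp
  rw [Finset.sum_congr rfl step4]
  -- split range B into range (N+1) ∪ Ico (N+1) B
  rw [Finset.range_eq_Ico, ← Finset.sum_Ico_consecutive _ (Nat.zero_le (N + 1)) hNB,
    ← Finset.range_eq_Ico]
  congr 1
  · -- small-k part equals g 0
    have : ∀ k ∈ range (N + 1),
        (∑ j ∈ range (N + 1), if j ≤ k then a j k else 0) • g k
          = if k = 0 then g k else 0 := by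
      intro k hk
      rw [mem_range] at hk
      have e : (∑ j ∈ range (N + 1), if j ≤ k then a j k else 0)
          = ∑ j ∈ range (k + 1), a j k := by
        rw [← Finset.sum_filter]
        apply Finset.sum_congr
        · ext j; simp only [mem_filter, mem_range]; omega
        · intros; rfl
      rw [e, ha]
      rw [binom_id n k]
      split_ifs <;> simp
    rw [Finset.sum_congr rfl this]
    simp
  · -- large-k part
    apply Finset.sum_congr rfl
    intro k hk
    rw [mem_Ico] at hk
    congr 1
    apply Finset.sum_congr rfl
    intro j hj
    rw [mem_range] at hj
    rw [if_pos (by omega)]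
end

section
/- Let $M$ be an additive commutative group, let $g : \mathbb{N} \to M$ have finite support, and let $n, N$ be natural numbers. Then $g(0) = \sum_{j=0}^{N}\sum_{i \ge 0}(-1)^j\binom{n+j}{j}\binom{n+j+i}{i}\, g(i+j) \;-\; \sum_{k \ge N+1}\sum_{j=0}^{N}(-1)^j\binom{n+j}{j}\binom{n+k}{k-j}\, g(k)$, all sums being finite by the support assumption. -/
open Finset

lemma bin_key (n j k : ℕ) (h : j ≤ k) :
    (n + j).choose j * (n + k).choose (k - j) = (n + k).choose k * k.choose j := by
  have h1 : (n + k).choose (k - j) = (n + k).choose (n + j) := by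
    have : k - j = (n + k) - (n + j) := by omega
    rw [this, Nat.choose_symm (by omega)]
  have h2 : (n + j).choose j = (n + j).choose n := by
    have hs := Nat.choose_symm (show n ≤ n + j by omega)
    rw [← hs]
    congr 1
    omega
  have h3 : (n + k).choose n = (n + k).choose k := by
    have hs := Nat.choose_symm (show k ≤ n + k by omega)
    rw [← hs]
    congr 1
    omega
  rw [h1, h2, Nat.mul_comm, Nat.choose_mul (by omega)]
  have e1 : n + k - n = k := by omega
  have e2 : n + j - n = j := by omega
  rw [e1, e2, h3]

/-- Abstract form of Corollary A.2: for `g : ℕ → M` of finite support,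
`g 0 = ∑_{j=0}^N ∑_{i≥0} (-1)^j C(n+j,j) C(n+j+i,i) g(i+j)
        - ∑_{k≥N+1} ∑_{j=0}^N (-1)^j C(n+j,j) C(n+k,k-j) g(k)`. -/
theorem key_corollary {M : Type*} [AddCommGroup M] (g : ℕ → M)
    (hg : (Function.support g).Finite) (n N : ℕ) :
    g 0 =
      (∑ j ∈ Finset.range (N + 1), ∑ᶠ i : ℕ,
          ((-1 : ℤ) ^ j * ((n + j).choose j : ℤ) * ((n + j + i).choose i : ℤ)) • g (i + j)) -
      ∑ᶠ (k : ℕ) (_ : N + 1 ≤ k),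
        (∑ j ∈ Finset.range (N + 1),
            (-1 : ℤ) ^ j * ((n + j).choose j : ℤ) * ((n + k).choose (k - j) : ℤ)) • g k := by
  classical
  set K := hg.toFinset.sup id + N + 2 with hKdef
  have hgK : ∀ k, K ≤ k → g k = 0 := by
    intro k hk
    by_contra h
    have hmem : k ∈ hg.toFinset := hg.mem_toFinset.2 h
    have := Finset.le_sup (f := id) hmem
    simp only [id] at this
    omega
  have hNK : N + 1 < K := by omega
  set a : ℕ → ℕ → ℤ := fun j k =>
    (-1 : ℤ) ^ j * ((n + j).choose j : ℤ) * ((n + k).choose (k - j) : ℤ) with ha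
  -- first term
  have h1 : ∀ j ∈ Finset.range (N + 1),
      (∑ᶠ i : ℕ, ((-1 : ℤ) ^ j * ((n + j).choose j : ℤ) * ((n + j + i).choose i : ℤ)) • g (i + j))
        = ∑ k ∈ Finset.range K, (if j ≤ k then a j k else 0) • g k := by
    intro j hj
    simp only [Finset.mem_range] at hj
    have step1 : (∑ᶠ i : ℕ,
        ((-1 : ℤ) ^ j * ((n + j).choose j : ℤ) * ((n + j + i).choose i : ℤ)) • g (i + j))
        = ∑ i ∈ Finset.range K,
        ((-1 : ℤ) ^ j * ((n + j).choose j : ℤ) * ((n + j + i).choose i : ℤ)) • g (i + j) := by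
      apply finsum_eq_sum_of_support_subset
      intro i hi
      simp only [Function.mem_support] at hi
      simp only [Finset.coe_range, Set.mem_Iio]
      by_contra hc
      push_neg at hc
      rw [hgK (i + j) (by omega), smul_zero] at hi
      exact hi rfl
    rw [step1]
    have step2 : ∑ i ∈ Finset.range K,
        ((-1 : ℤ) ^ j * ((n + j).choose j : ℤ) * ((n + j + i).choose i : ℤ)) • g (i + j)
        = ∑ k ∈ Finset.Ico j (K + j), a j k • g k := by
      rw [Finset.sum_Ico_eq_sum_range]
      have hKj : K + j - j = K := by omega
      rw [hKj]
      apply Finset.sum_congr rfl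
      intro i _
      have e1 : j + i - j = i := by omega
      have e2 : n + (j + i) = n + j + i := by omega
      have e3 : j + i = i + j := by omega
      simp only [ha]
      rw [e1, e2, e3]
    rw [step2]
    have step3 : ∑ k ∈ Finset.Ico j (K + j), a j k • g k
        = ∑ k ∈ Finset.Ico j K, a j k • g k := by
      rw [← Finset.sum_Ico_consecutive _ (by omega : j ≤ K) (by omega : K ≤ K + j)]
      have : ∑ k ∈ Finset.Ico K (K + j), a j k • g k = 0 := by
        apply Finset.sum_eq_zero
        intro k hk
        simp only [Finset.mem_Ico] at hk
        rw [hgK k hk.1, smul_zero]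
      rw [this, add_zero]
    rw [step3]
    symm
    calc ∑ k ∈ Finset.range K, (if j ≤ k then a j k else 0) • g k
        = ∑ k ∈ Finset.range K, (if j ≤ k then a j k • g k else 0) := by
          apply Finset.sum_congr rfl
          intro k _
          split <;> simp
      _ = ∑ k ∈ (Finset.range K).filter (fun k => j ≤ k), a j k • g k :=
          (Finset.sum_filter _ _).symm
      _ = ∑ k ∈ Finset.Ico j K, a j k • g k := by
          congr 1
          ext k
          simp only [Finset.mem_filter, Finset.mem_range, Finset.mem_Ico]
          omega
  rw [Finset.sum_congr rfl h1]
  -- second term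
  have h2 : (∑ᶠ (k : ℕ) (_ : N + 1 ≤ k),
        (∑ j ∈ Finset.range (N + 1),
            (-1 : ℤ) ^ j * ((n + j).choose j : ℤ) * ((n + k).choose (k - j) : ℤ)) • g k)
      = ∑ k ∈ Finset.range K,
        (if N + 1 ≤ k then (∑ j ∈ Finset.range (N + 1), a j k) else 0) • g k := by
    have he : ∀ k : ℕ, (∑ᶠ (_ : N + 1 ≤ k),
        (∑ j ∈ Finset.range (N + 1),
            (-1 : ℤ) ^ j * ((n + j).choose j : ℤ) * ((n + k).choose (k - j) : ℤ)) • g k)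
        = (if N + 1 ≤ k then (∑ j ∈ Finset.range (N + 1), a j k) else 0) • g k := by
      intro k
      rw [finsum_eq_if]
      split
      · rfl
      · rw [zero_smul]
    rw [finsum_congr he]
    apply finsum_eq_sum_of_support_subset
    intro k hk
    simp only [Function.mem_support] at hk
    simp only [Finset.coe_range, Set.mem_Iio]
    by_contra hc
    push_neg at hc
    rw [hgK k hc, smul_zero] at hk
    exact hk rfl
  rw [h2]
  rw [Finset.sum_comm]
  rw [← Finset.sum_sub_distrib]
  have h3 : ∀ k ∈ Finset.range K,
      ((∑ j ∈ Finset.range (N + 1), (if j ≤ k then a j k else 0) • g k) -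
        (if N + 1 ≤ k then (∑ j ∈ Finset.range (N + 1), a j k) else 0) • g k)
      = (if k = 0 then (1 : ℤ) else 0) • g k := by
    intro k _
    rw [← Finset.sum_smul, ← sub_smul]
    congr 1
    by_cases hk : N + 1 ≤ k
    · rw [if_pos hk, if_neg (by omega)]
      have : ∀ j ∈ Finset.range (N + 1), (if j ≤ k then a j k else 0) = a j k := by
        intro j hj
        simp only [Finset.mem_range] at hj
        rw [if_pos (by omega)]
      rw [Finset.sum_congr rfl this, sub_self]
    · -- k ≤ N
      rw [if_neg hk, sub_zero]
      push_neg at hk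
      have hsub : Finset.range (k + 1) ⊆ Finset.range (N + 1) := by
        apply Finset.range_subset_range.2; omega
      rw [← Finset.sum_subset hsub (by
        intro j _ hj
        simp only [Finset.mem_range] at hj
        rw [if_neg (by omega)])]
      have : ∀ j ∈ Finset.range (k + 1), (if j ≤ k then a j k else 0)
          = ((n + k).choose k : ℤ) * ((-1 : ℤ) ^ j * (k.choose j : ℤ)) := by
        intro j hj
        simp only [Finset.mem_range] at hj
        rw [if_pos (by omega)]
        simp only [ha]
        have hb : (((n + j).choose j : ℤ)) * (((n + k).choose (k - j) : ℤ))
            = (((n + k).choose k : ℤ)) * ((k.choose j : ℤ)) := by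
          exact_mod_cast congrArg (Nat.cast : ℕ → ℤ) (bin_key n j k (by omega))
        rw [mul_assoc, hb]
        ring
      rw [Finset.sum_congr rfl this, ← Finset.mul_sum, Int.alternating_sum_range_choose]
      split
      · rename_i hk0
        subst hk0
        simp
      · simp
  rw [Finset.sum_congr rfl h3]
  have h4 : ∀ k ∈ Finset.range K, (if k = 0 then (1 : ℤ) else 0) • g k
      = if k = 0 then g k else 0 := by
    intro k _
    split <;> simp
  rw [Finset.sum_congr rfl h4, Finset.sum_ite_eq' (Finset.range K) 0 g,
    if_pos (by simp only [Finset.mem_range]; omega)]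
end
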